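/- Let X, Y, W be finite nonempty sets, let n be a positive integer, let P be a probability mass function on X × Y, let the dataset S = ((X_1,Y_1),...,(X_n,Y_n)) consist of n independent samples from P, and let A be a randomized algorithm mapping each dataset in (X × Y)^n to a probability mass function A(S) on W; let the random variable W be drawn from A(S). Suppose A is ε-selectively differentially private over the x-component, i.e., for every pair of datasets S, S' ∈ (X × Y)^n that agree in all coordinates except possibly the x-component of a single sample (the index and the y-component of that sample being equal), and for every w ∈ W, one has A(S)(w) ≤ e^ε · A(S')(w). Then for every index i, the conditional mutual information satisfies I(W ; X_i | Y_i) ≤ ε, where the mutual information is computed with respect to the joint distribution of (X_i, Y_i, W). -/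

import Mathlib

open scoped BigOperators

/-- Mutual information `I(A;B)` of a (joint) probability mass function `p` on `A × B`,
with natural logarithm and the convention `0 · log 0 = 0` (automatic since
`Real.log 0 = 0` in Mathlib). -/
noncomputable def mutualInfo {A B : Type*} [Fintype A] [Fintype B]
    (p : A → B → ℝ) : ℝ :=
  ∑ a, ∑ b,
    p a b * Real.log (p a b / ((∑ b', p a b') * (∑ a', p a' b)))

/-- Conditional mutual information `I(A;B|C)` of a (joint) probability mass
function `p` on `A × B × C`:
`I(A;B|C) = ∑ p(a,b,c) log ( p(a,b,c) p(c) / (p(a,c) p(b,c)) )`. -/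
noncomputable def condMutualInfo {A B C : Type*} [Fintype A] [Fintype B] [Fintype C]
    (p : A → B → C → ℝ) : ℝ :=
  ∑ a, ∑ b, ∑ c,
    p a b c * Real.log ((p a b c * (∑ a', ∑ b', p a' b' c)) /
      ((∑ b', p a b' c) * (∑ a', p a' b c)))

/-- Abstract bound on conditional mutual information in terms of a pointwise
likelihood-ratio bound. -/
lemma condMutualInfo_le_of_ratio {W X Y : Type*} [Fintype W] [Fintype X] [Fintype Y]
    (p : W → X → Y → ℝ) (ε : ℝ)
    (hp0 : ∀ w x y, 0 ≤ p w x y)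
    (hsum : ∑ w, ∑ x, ∑ y, p w x y = 1)
    (hkey : ∀ w x x' y,
      p w x y * (∑ w', p w' x' y) ≤ Real.exp ε * (p w x' y * (∑ w', p w' x y))) :
    condMutualInfo p ≤ ε := by
  have hterm : ∀ w x y,
      p w x y * Real.log ((p w x y * (∑ w', ∑ x', p w' x' y)) /
        ((∑ x', p w x' y) * (∑ w', p w' x y))) ≤ ε * p w x y := by
    intro w x y
    by_cases h : p w x y = 0
    · simp [h]
    have hpos : 0 < p w x y := lt_of_le_of_ne (hp0 w x y) (Ne.symm h)
    have hwx : p w x y ≤ ∑ x', p w x' y :=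
      Finset.single_le_sum (fun x' _ => hp0 w x' y) (Finset.mem_univ x)
    have hwy : p w x y ≤ ∑ w', p w' x y :=
      Finset.single_le_sum (fun w' _ => hp0 w' x y) (Finset.mem_univ w)
    have hyy : p w x y ≤ ∑ w', ∑ x', p w' x' y := by
      refine le_trans hwx (Finset.single_le_sum (f := fun w' => ∑ x', p w' x' y)
        (fun w' _ => Finset.sum_nonneg fun x' _ => hp0 w' x' y) (Finset.mem_univ w))
    have hDpos : 0 < (∑ x', p w x' y) * (∑ w', p w' x y) :=
      mul_pos (lt_of_lt_of_le hpos hwx) (lt_of_lt_of_le hpos hwy)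
    have hNpos : 0 < p w x y * (∑ w', ∑ x', p w' x' y) :=
      mul_pos hpos (lt_of_lt_of_le hpos hyy)
    have hN : p w x y * (∑ w', ∑ x', p w' x' y) ≤
        Real.exp ε * ((∑ x', p w x' y) * (∑ w', p w' x y)) := by
      have h1 : (∑ w', ∑ x', p w' x' y) = ∑ x', ∑ w', p w' x' y := Finset.sum_comm
      rw [h1, Finset.mul_sum]
      have h2 : ∀ x' : X, x' ∈ Finset.univ →
          p w x y * (∑ w', p w' x' y) ≤
            Real.exp ε * (p w x' y * (∑ w', p w' x y)) := fun x' _ => hkey w x x' y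
      refine le_trans (Finset.sum_le_sum h2) (le_of_eq ?_)
      rw [← Finset.mul_sum, ← Finset.sum_mul]
    have hlog : Real.log ((p w x y * (∑ w', ∑ x', p w' x' y)) /
        ((∑ x', p w x' y) * (∑ w', p w' x y))) ≤ ε := by
      rw [Real.log_le_iff_le_exp (div_pos hNpos hDpos)]
      rw [div_le_iff₀ hDpos]
      linarith [hN]
    calc p w x y * Real.log _ ≤ p w x y * ε :=
          mul_le_mul_of_nonneg_left hlog (le_of_lt hpos)
      _ = ε * p w x y := mul_comm _ _
  unfold condMutualInfo
  calc (∑ w, ∑ x, ∑ y, p w x y * Real.log _)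
      ≤ ∑ w, ∑ x, ∑ y, ε * p w x y := by
        refine Finset.sum_le_sum fun w _ => Finset.sum_le_sum fun x _ =>
          Finset.sum_le_sum fun y _ => hterm w x y
    _ = ε := by
        simp only [← Finset.mul_sum]
        rw [hsum, mul_one]

/-- Summing the i.i.d. product density over all datasets whose `i`-th coordinate
is pinned to `z0` gives `P z0`. -/
lemma sum_prod_pin {X Y : Type*} [Fintype X] [Fintype Y] [DecidableEq X] [DecidableEq Y]
    {n : ℕ} (i : Fin n) (P : X × Y → ℝ) (hP1 : ∑ z, P z = 1) (z0 : X × Y) :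
    ∑ S : Fin n → X × Y, (if S i = z0 then ∏ j, P (S j) else 0) = P z0 := by
  have hrw : ∀ S : Fin n → X × Y,
      (if S i = z0 then ∏ j, P (S j) else 0) =
        ∏ j, (if j = i then (if S j = z0 then P (S j) else 0) else P (S j)) := by
    intro S
    by_cases h : S i = z0
    · rw [if_pos h]
      refine Finset.prod_congr rfl fun j _ => ?_
      by_cases hj : j = i
      · subst hj; simp [h]
      · simp [hj]
    · rw [if_neg h]
      exact (Finset.prod_eq_zero (Finset.mem_univ i) (by simp [h])).symm
  have hps := Fintype.prod_sum (ι := Fin n) (κ := fun _ => X × Y) (R := ℝ)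
    (fun j z => if j = i then (if z = z0 then P z else 0) else P z)
  rw [Finset.sum_congr rfl fun S _ => hrw S, ← hps]
  have hj : ∀ j : Fin n,
      (∑ z : X × Y, if j = i then (if z = z0 then P z else 0) else P z) =
        if j = i then P z0 else 1 := by
    intro j
    by_cases hj : j = i <;> simp [hj, hP1, Finset.sum_ite_eq']
  rw [Finset.prod_congr rfl fun j _ => hj j]
  simp

/-- The key selective-DP inequality for the joint density, comparing the
`x`-component against `x'` at coordinate `i`. -/
lemma dp_key_ineq {X Y W : Type*} [Fintype X] [Fintype Y] [Fintype W]
    [DecidableEq X] [DecidableEq Y]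
    {n : ℕ} (i : Fin n) (P : X × Y → ℝ) (hP0 : ∀ z, 0 ≤ P z)
    (A : (Fin n → X × Y) → W → ℝ) (hA0 : ∀ S w, 0 ≤ A S w) (ε : ℝ)
    (hsDP : ∀ S S' : Fin n → X × Y, ∀ i : Fin n,
      (∀ j, j ≠ i → S j = S' j) → (S i).2 = (S' i).2 →
      ∀ w, A S w ≤ Real.exp ε * A S' w)
    (w : W) (x x' : X) (y : Y) :
    (∑ S : Fin n → X × Y, if S i = (x, y) then (∏ j, P (S j)) * A S w else 0) * P (x', y)
      ≤ Real.exp ε *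
        ((∑ S : Fin n → X × Y, if S i = (x', y) then (∏ j, P (S j)) * A S w else 0)
          * P (x, y)) := by
  classical
  set σ : X × Y ≃ X × Y := Equiv.swap (x, y) (x', y) with hσ
  set φ : (Fin n → X × Y) → (Fin n → X × Y) :=
    fun S => fun j => if j = i then σ (S j) else S j with hφ
  have hinv : Function.Involutive φ := by
    intro S; funext j
    by_cases hj : j = i <;> simp [hφ, hj, hσ, Equiv.swap_apply_self]
  have hreindex :
      (∑ S : Fin n → X × Y, (Real.exp ε *
          ((if S i = (x', y) then (∏ j, P (S j)) * A S w else 0) * P (x, y)))) =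
        ∑ S : Fin n → X × Y, (Real.exp ε *
          ((if φ S i = (x', y) then (∏ j, P (φ S j)) * A (φ S) w else 0) * P (x, y))) :=
    (Equiv.sum_comp (Function.Involutive.toPerm φ hinv)
      (fun S => Real.exp ε *
        ((if S i = (x', y) then (∏ j, P (S j)) * A S w else 0) * P (x, y)))).symm
  rw [Finset.sum_mul, Finset.sum_mul, Finset.mul_sum, hreindex]
  refine Finset.sum_le_sum fun S _ => ?_
  by_cases h : S i = (x, y)
  · have hφi : φ S i = (x', y) := by simp [hφ, hσ, h]
    rw [if_pos h, if_pos hφi]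
    have hAgree : ∀ j, j ≠ i → S j = φ S j := by
      intro j hj; simp [hφ, hj]
    have hy2 : (S i).2 = ((φ S) i).2 := by rw [h, hφi]
    have hA := hsDP S (φ S) i hAgree hy2 w
    have h1 : ∏ j, P (S j) = P (x, y) * ∏ j ∈ Finset.univ.erase i, P (S j) := by
      rw [← Finset.mul_prod_erase Finset.univ (fun j => P (S j)) (Finset.mem_univ i), h]
    have h2 : ∏ j, P (φ S j) = P (x', y) * ∏ j ∈ Finset.univ.erase i, P (S j) := by
      rw [← Finset.mul_prod_erase Finset.univ (fun j => P (φ S j)) (Finset.mem_univ i), hφi]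
      congr 1
      exact Finset.prod_congr rfl fun j hj => by
        rw [← hAgree j (Finset.ne_of_mem_erase hj)]
    set Q : ℝ := ∏ j ∈ Finset.univ.erase i, P (S j) with hQ
    have hQ0 : 0 ≤ Q := Finset.prod_nonneg fun j _ => hP0 _
    rw [h1, h2]
    have hc : 0 ≤ P (x, y) * P (x', y) * Q :=
      mul_nonneg (mul_nonneg (hP0 _) (hP0 _)) hQ0
    have hmul := mul_le_mul_of_nonneg_left hA hc
    calc P (x, y) * Q * A S w * P (x', y)
        = (P (x, y) * P (x', y) * Q) * A S w := by ring
      _ ≤ (P (x, y) * P (x', y) * Q) * (Real.exp ε * A (φ S) w) := hmul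
      _ = Real.exp ε * ((P (x', y) * Q * A (φ S) w) * P (x, y)) := by ring
  · rw [if_neg h, zero_mul]
    have h0 : (0:ℝ) ≤ (if φ S i = (x', y) then (∏ j, P (φ S j)) * A (φ S) w else 0) := by
      split
      · exact mul_nonneg (Finset.prod_nonneg fun j _ => hP0 _) (hA0 _ _)
      · exact le_refl 0
    exact mul_nonneg (Real.exp_pos ε).le (mul_nonneg h0 (hP0 _))

/-- If the randomized training algorithm `A` is ε-selectively
differentially private over the `x`-component, then for every index `i`,
`I(W ; X_i | Y_i) ≤ ε`, where the information quantities are computed with respect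
to the joint law of `(X_i, Y_i, W)` induced by `n` i.i.d. samples from `P` and
`W ~ A(S)`. -/
theorem sdp_over_x_bounds_memorization
    {X Y W : Type*} [Fintype X] [Fintype Y] [Fintype W]
    [Nonempty X] [Nonempty Y] [Nonempty W]
    [DecidableEq X] [DecidableEq Y]
    (n : ℕ) (hn : 0 < n)
    (P : X × Y → ℝ) (hP0 : ∀ z, 0 ≤ P z) (hP1 : ∑ z, P z = 1)
    (A : (Fin n → X × Y) → W → ℝ)
    (hA0 : ∀ S w, 0 ≤ A S w) (hA1 : ∀ S, ∑ w, A S w = 1)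
    (ε : ℝ)
    (hsDP : ∀ S S' : Fin n → X × Y, ∀ i : Fin n,
      (∀ j, j ≠ i → S j = S' j) → (S i).2 = (S' i).2 →
      ∀ w, A S w ≤ Real.exp ε * A S' w)
    (i : Fin n) :
    condMutualInfo
      (fun (w : W) (x : X) (y : Y) =>
        ∑ S : Fin n → X × Y,
          if S i = (x, y) then (∏ j, P (S j)) * A S w else 0) ≤ ε := by
  set p : W → X → Y → ℝ := fun w x y =>
    ∑ S : Fin n → X × Y, if S i = (x, y) then (∏ j, P (S j)) * A S w else 0 with hp
  have hp0 : ∀ w x y, 0 ≤ p w x y := by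
    intro w x y
    refine Finset.sum_nonneg fun S _ => ?_
    split
    · exact mul_nonneg (Finset.prod_nonneg fun j _ => hP0 _) (hA0 _ _)
    · exact le_refl 0
  have hmarg : ∀ x y, (∑ w, p w x y) = P (x, y) := by
    intro x y
    rw [hp]
    rw [Finset.sum_comm]
    have hS : ∀ S : Fin n → X × Y,
        (∑ w : W, if S i = (x, y) then (∏ j, P (S j)) * A S w else 0) =
          (if S i = (x, y) then ∏ j, P (S j) else 0) := by
      intro S
      by_cases h : S i = (x, y)
      · simp only [h, if_true]
        rw [← Finset.mul_sum, hA1 S, mul_one]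
      · simp [h]
    rw [Finset.sum_congr rfl fun S _ => hS S]
    exact sum_prod_pin i P hP1 (x, y)
  refine condMutualInfo_le_of_ratio p ε hp0 ?_ ?_
  · -- total mass 1
    have h1 : (∑ w, ∑ x, ∑ y, p w x y) = ∑ x, ∑ y, ∑ w, p w x y := by
      rw [Finset.sum_comm]
      exact Finset.sum_congr rfl fun x _ => Finset.sum_comm
    rw [h1, Finset.sum_congr rfl fun x _ => Finset.sum_congr rfl fun y _ => hmarg x y]
    rw [← Fintype.sum_prod_type]
    exact hP1
  · intro w x x' y
    rw [hmarg x' y, hmarg x y, hp]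
    exact dp_key_ineq i P hP0 A hA0 ε hsDP w x x' y
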